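/- Let α, β : ℤ × ℝ → ℂ satisfy the AL₍₁,₁₎ flow ∂_tα = iγ(c₀₋α⁻ + c₀₊α⁺), ∂_tβ = −iγ(c₀₊β⁻ + c₀₋β⁺), where γ = 1 − αβ. Then the second conserved density ρ₂ = −(1/2)(α⁺β)² + γα⁺β⁻ satisfies ∂_t ρ₂ = i(S⁺ − I)[γ(−c₀₋ αβ⁻ − c₀₊ αα⁺(β⁻)² + c₀₊ γ⁻α⁺β⁻⁻)]. -/

import Mathlib

/-- Under the AL₍₁,₁₎ flow `∂_tα = iγ(c₀₋α⁻ + c₀₊α⁺)`, `∂_tβ = −iγ(c₀₊β⁻ + c₀₋β⁺)`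
with `γ = 1 − αβ`, the second conserved density `ρ₂ = −(1/2)(α⁺β)² + γα⁺β⁻` satisfies
`∂_tρ₂ = i(S⁺ − I)[γ(−c₀₋αβ⁻ − c₀₊αα⁺(β⁻)² + c₀₊γ⁻α⁺β⁻⁻)]`. -/
theorem stmt14 (α β : ℝ → ℤ → ℂ) (c0p c0m : ℂ)
    (hα : ∀ (t : ℝ) (n : ℤ), HasDerivAt (fun s => α s n)
      (Complex.I * (1 - α t n * β t n) * (c0m * α t (n - 1) + c0p * α t (n + 1))) t)
    (hβ : ∀ (t : ℝ) (n : ℤ), HasDerivAt (fun s => β s n)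
      (-(Complex.I * (1 - α t n * β t n) * (c0p * β t (n - 1) + c0m * β t (n + 1)))) t)
    (γ J : ℝ → ℤ → ℂ)
    (hγ : ∀ (t : ℝ) (n : ℤ), γ t n = 1 - α t n * β t n)
    (hJ : ∀ (t : ℝ) (n : ℤ), J t n = γ t n *
      (-c0m * α t n * β t (n - 1) - c0p * α t n * α t (n + 1) * (β t (n - 1)) ^ 2
        + c0p * γ t (n - 1) * α t (n + 1) * β t (n - 2))) :
    ∀ (t : ℝ) (n : ℤ),
      HasDerivAt
        (fun s => -(1 / 2) * (α s (n + 1) * β s n) ^ 2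
          + (1 - α s n * β s n) * α s (n + 1) * β s (n - 1))
        (Complex.I * (J t (n + 1) - J t n)) t := by
  intro t n
  have hA1 := hα t (n + 1)
  have hA0 := hα t n
  have hB0 := hβ t n
  have hBm := hβ t (n - 1)
  have D1 := ((hA1.mul hB0).mul (hA1.mul hB0)).const_mul (-(1/2) : ℂ)
  have D2 := (((hA0.mul hB0).const_sub 1).mul hA1).mul hBm
  have D := D1.add D2
  have hfun : (fun s => -(1 / 2) * (α s (n + 1) * β s n) ^ 2
      + (1 - α s n * β s n) * α s (n + 1) * β s (n - 1))
      = (fun s => -(1/2 : ℂ) * (α s (n + 1) * β s n * (α s (n + 1) * β s n))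
      + (1 - α s n * β s n) * α s (n + 1) * β s (n - 1)) := by
    funext s; ring
  rw [hfun]
  refine D.congr_deriv ?_
  have e1 : (n : ℤ) + 1 - 1 = n := by ring
  have e2 : (n : ℤ) + 1 - 2 = n - 1 := by ring
  have e3 : (n : ℤ) - 1 + 1 = n := by ring
  have e4 : (n : ℤ) - 1 - 1 = n - 2 := by ring
  simp only [hJ, hγ, e1, e2, e3, e4, Pi.mul_apply]
  ring
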